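/- Let (X, d) be a metric space equipped with a Borel measure μ, let L > 0, and let f : X → ℝ be Borel measurable with f² μ-integrable and satisfy |f(x) − f(y)| ≤ L·(d(x, y))^(1/2) for all x, y ∈ X. Suppose x₀ ∈ X satisfies |f(x₀)| = M where M > 0 and |f(x)| ≤ M for all x ∈ X. Then ∫_X f² dμ ≥ (M²/4)·μ(closedBall(x₀, M²/(4L²))). In particular, if μ(closedBall(x₀, M²/(4L²))) ≥ 4π·(M²/(4L²))², then ∫_X f² dμ ≥ (π/(16·L⁴))·M⁶. -/

import Mathlib

open MeasureTheory

/-- Let `(X, d)` be a metric space with a Borel measure `μ`, `L > 0`,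
and `f : X → ℝ` Borel measurable with `f²` integrable and
`|f(x) − f(y)| ≤ L·d(x,y)^(1/2)`. If `x₀` satisfies `|f(x₀)| = M` with `M > 0` and
`|f(x)| ≤ M` for all `x`, then `∫ f² dμ ≥ (M²/4)·μ(closedBall(x₀, M²/(4L²)))`; in
particular if `μ(closedBall(x₀, M²/(4L²))) ≥ 4π·(M²/(4L²))²`, then
`∫ f² dμ ≥ (π/(16L⁴))·M⁶`. -/
theorem stmt_12 {X : Type*} [MetricSpace X] [MeasurableSpace X] [BorelSpace X]
    (μ : Measure X) (L : ℝ) (hL : 0 < L)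
    (f : X → ℝ) (hf : Measurable f)
    (hint : Integrable (fun x => f x ^ 2) μ)
    (hHolder : ∀ x y : X, |f x - f y| ≤ L * dist x y ^ ((1 : ℝ) / 2))
    (x₀ : X) (M : ℝ) (hM : 0 < M) (hx₀ : |f x₀| = M) (hbd : ∀ x, |f x| ≤ M) :
    (M ^ 2 / 4) * (μ (Metric.closedBall x₀ (M ^ 2 / (4 * L ^ 2)))).toReal
        ≤ ∫ x, f x ^ 2 ∂μ ∧
    (ENNReal.ofReal (4 * Real.pi * (M ^ 2 / (4 * L ^ 2)) ^ 2)
        ≤ μ (Metric.closedBall x₀ (M ^ 2 / (4 * L ^ 2))) →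
      Real.pi / (16 * L ^ 4) * M ^ 6 ≤ ∫ x, f x ^ 2 ∂μ) := by
  set r : ℝ := M ^ 2 / (4 * L ^ 2) with hr
  set s := Metric.closedBall x₀ r with hs
  have hrpos : 0 < r := by positivity
  have hreq : r = (M / (2 * L)) ^ 2 := by
    rw [hr]; field_simp; ring
  -- lower bound on the ball
  have hlb : ∀ x ∈ s, M ^ 2 / 4 ≤ f x ^ 2 := by
    intro x hx
    have hdist : dist x₀ x ≤ r := by
      rw [dist_comm]; exact hx
    have h1 : dist x₀ x ^ ((1:ℝ)/2) ≤ r ^ ((1:ℝ)/2) :=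
      Real.rpow_le_rpow dist_nonneg hdist (by norm_num)
    have h2 : r ^ ((1:ℝ)/2) = M / (2 * L) := by
      rw [← Real.sqrt_eq_rpow, hreq, Real.sqrt_sq (by positivity)]
    have h3 : |f x₀ - f x| ≤ M / 2 := by
      calc |f x₀ - f x| ≤ L * dist x₀ x ^ ((1:ℝ)/2) := hHolder x₀ x
        _ ≤ L * (M / (2 * L)) := by
            rw [← h2]; exact mul_le_mul_of_nonneg_left h1 hL.le
        _ = M / 2 := by field_simp
    have h4 : M / 2 ≤ |f x| := by
      have := abs_sub_abs_le_abs_sub (f x₀) (f x)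
      rw [hx₀] at this
      linarith
    calc M ^ 2 / 4 = (M / 2) ^ 2 := by ring
      _ ≤ |f x| ^ 2 := by
          apply pow_le_pow_left₀ (by positivity) h4
      _ = f x ^ 2 := sq_abs _
  -- finiteness of μ s
  have hmeas : MeasurableSet s := measurableSet_closedBall
  have hμs : μ s < ⊤ := by
    have hsub : s ⊆ {x | M ^ 2 / 4 ≤ f x ^ 2} := fun x hx => hlb x hx
    have := hint.measure_ge_lt_top (show 0 < M ^ 2 / 4 by positivity)
    exact lt_of_le_of_lt (measure_mono hsub) this
  have hconst : IntegrableOn (fun _ : X => M ^ 2 / 4) s μ :=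
    integrableOn_const hμs.ne
  have h1 : ∫ x in s, (M ^ 2 / 4) ∂μ ≤ ∫ x in s, f x ^ 2 ∂μ :=
    setIntegral_mono_on hconst hint.integrableOn hmeas hlb
  have h2 : ∫ x in s, f x ^ 2 ∂μ ≤ ∫ x, f x ^ 2 ∂μ :=
    setIntegral_le_integral hint (Filter.Eventually.of_forall fun x => sq_nonneg _)
  have hmain : M ^ 2 / 4 * (μ s).toReal ≤ ∫ x, f x ^ 2 ∂μ := by
    have := setIntegral_const (μ := μ) (s := s) (M ^ 2 / 4)
    rw [this] at h1
    simpa [smul_eq_mul, mul_comm, Measure.real] using h1.trans h2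
  refine ⟨hmain, fun hμball => ?_⟩
  have ht : 4 * Real.pi * r ^ 2 ≤ (μ s).toReal := by
    have := ENNReal.toReal_mono hμs.ne hμball
    rwa [ENNReal.toReal_ofReal (by positivity)] at this
  have : Real.pi / (16 * L ^ 4) * M ^ 6 ≤ M ^ 2 / 4 * (μ s).toReal := by
    calc Real.pi / (16 * L ^ 4) * M ^ 6 = M ^ 2 / 4 * (4 * Real.pi * r ^ 2) := by
          rw [hr]; field_simp; ring
      _ ≤ M ^ 2 / 4 * (μ s).toReal :=
          mul_le_mul_of_nonneg_left ht (by positivity)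
  linarith
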